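/- Let a,b,c,d ∈ ℂ with (a²d² - b²c²)(b²d² - c²a²)(c²d² - a²b²) ≠ 0, and define Hudson's quartic coefficients A = (b⁴+c⁴-a⁴-d⁴)/(a²d²-b²c²), B = (c⁴+a⁴-b⁴-d⁴)/(b²d²-c²a²), C = (a⁴+b⁴-c⁴-d⁴)/(c²d²-a²b²), D = abcd(d²+a²-b²-c²)(d²+b²-c²-a²)(d²+c²-a²-b²)(a²+b²+c²+d²)/((a²d²-b²c²)(b²d²-c²a²)(c²d²-a²b²)). Then the point [a,b,c,d] lies on the Hudson quartic x⁴+y⁴+z⁴+w⁴ + 2Dxyzw + A(x²w²+y²z²) + B(y²w²+x²z²) + C(x²y²+z²w²) = 0. -/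

import Mathlib

theorem node_on_hudson_quartic (a b c d : ℂ)
    (h : (a^2*d^2 - b^2*c^2) * (b^2*d^2 - c^2*a^2) * (c^2*d^2 - a^2*b^2) ≠ 0) :
    a^4 + b^4 + c^4 + d^4
      + 2 * (a*b*c*d*(d^2+a^2-b^2-c^2)*(d^2+b^2-c^2-a^2)*(d^2+c^2-a^2-b^2)*(a^2+b^2+c^2+d^2)
          / ((a^2*d^2-b^2*c^2)*(b^2*d^2-c^2*a^2)*(c^2*d^2-a^2*b^2))) * (a*b*c*d)
      + ((b^4+c^4-a^4-d^4)/(a^2*d^2-b^2*c^2)) * (a^2*d^2 + b^2*c^2)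
      + ((c^4+a^4-b^4-d^4)/(b^2*d^2-c^2*a^2)) * (b^2*d^2 + a^2*c^2)
      + ((a^4+b^4-c^4-d^4)/(c^2*d^2-a^2*b^2)) * (a^2*b^2 + c^2*d^2) = 0 := by
  have h1 : (a^2*d^2 - b^2*c^2) ≠ 0 := fun e => h (by rw [e]; ring)
  have h2 : (b^2*d^2 - c^2*a^2) ≠ 0 := fun e => h (by rw [e]; ring)
  have h3 : (c^2*d^2 - a^2*b^2) ≠ 0 := fun e => h (by rw [e]; ring)
  have h2' : b^2*d^2 - a^2*c^2 ≠ 0 := by rw [mul_comm (a^2)]; exact h2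
  field_simp
  ring
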